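/- For the metric g = ε(e^{2t} dx² + e^{-2t} dy²) + μ dt² on ℝ³, the Ricci tensor with respect to the coordinate basis is the constant matrix diag(0, 0, -2); in particular it is degenerate at every point. -/

import Mathlib

open Real

noncomputable def pd {n : ℕ} (i : Fin n) (f : (Fin n → ℝ) → ℝ) (p : Fin n → ℝ) : ℝ :=
  fderiv ℝ f p (Pi.single i 1)

noncomputable def g3 (ε μ : ℝ) (p : Fin 3 → ℝ) : Matrix (Fin 3) (Fin 3) ℝ :=
  Matrix.diagonal ![ε * exp (2 * p 2), ε * exp (-2 * p 2), μ]

noncomputable def g3Inv (ε μ : ℝ) (p : Fin 3 → ℝ) : Matrix (Fin 3) (Fin 3) ℝ :=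
  Matrix.diagonal ![ε * exp (-2 * p 2), ε * exp (2 * p 2), μ⁻¹]

/-- Christoffel symbols of the Levi-Civita connection. -/
noncomputable def Γ3 (ε μ : ℝ) (k i j : Fin 3) (p : Fin 3 → ℝ) : ℝ :=
  (1/2) * ∑ l, g3Inv ε μ p k l *
    (pd i (fun q => g3 ε μ q j l) p + pd j (fun q => g3 ε μ q i l) p
      - pd l (fun q => g3 ε μ q i j) p)

/-- Ricci tensor ρᵢⱼ = ∂ₖΓᵏᵢⱼ - ∂ⱼΓᵏᵢₖ + ΓᵏₖₗΓˡᵢⱼ - ΓᵏⱼₗΓˡᵢₖ. -/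
noncomputable def Ric3 (ε μ : ℝ) (p : Fin 3 → ℝ) : Matrix (Fin 3) (Fin 3) ℝ :=
  Matrix.of fun i j =>
    (∑ k, pd k (Γ3 ε μ k i j) p) - (∑ k, pd j (Γ3 ε μ k i k) p)
      + (∑ k, ∑ l, Γ3 ε μ k k l p * Γ3 ε μ l i j p)
      - (∑ k, ∑ l, Γ3 ε μ k j l p * Γ3 ε μ l i k p)

lemma pd_const {n : ℕ} (c : ℝ) (i : Fin n) (p : Fin n → ℝ) : pd i (fun _ => c) p = 0 := by
  simp [pd]

lemma pd_cexp (c a : ℝ) (i : Fin 3) (p : Fin 3 → ℝ) :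
    pd i (fun q => c * exp (a * q 2)) p = if i = 2 then c * a * exp (a * p 2) else 0 := by
  have L := (ContinuousLinearMap.proj (R := ℝ) (φ := fun _ : Fin 3 => ℝ) 2).hasFDerivAt (x := p)
  have h := ((L.const_mul a).exp.const_mul c)
  simp only [ContinuousLinearMap.proj_apply] at h
  rw [pd, h.fderiv]
  simp only [ContinuousLinearMap.smul_apply, ContinuousLinearMap.proj_apply,
    Pi.single_apply, smul_eq_mul]
  split
  · next hh => rw [if_pos]; ring; simp [hh]
  · next hh => rw [if_neg]; ring; simp [Ne.symm hh]

section Entries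
variable (ε μ : ℝ) (p : Fin 3 → ℝ)
lemma E00 : (fun q : Fin 3 → ℝ => g3 ε μ q 0 0) = fun q => ε * exp (2 * q 2) := rfl
lemma E11 : (fun q : Fin 3 → ℝ => g3 ε μ q 1 1) = fun q => ε * exp (-2 * q 2) := rfl
lemma E22 : (fun q : Fin 3 → ℝ => g3 ε μ q 2 2) = fun _ => μ := rfl
lemma E01 : (fun q : Fin 3 → ℝ => g3 ε μ q 0 1) = fun _ => 0 := rfl
lemma E02 : (fun q : Fin 3 → ℝ => g3 ε μ q 0 2) = fun _ => 0 := rfl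
lemma E10 : (fun q : Fin 3 → ℝ => g3 ε μ q 1 0) = fun _ => 0 := rfl
lemma E12 : (fun q : Fin 3 → ℝ => g3 ε μ q 1 2) = fun _ => 0 := rfl
lemma E20 : (fun q : Fin 3 → ℝ => g3 ε μ q 2 0) = fun _ => 0 := rfl
lemma E21 : (fun q : Fin 3 → ℝ => g3 ε μ q 2 1) = fun _ => 0 := rfl
lemma I00 : g3Inv ε μ p 0 0 = ε * exp (-2 * p 2) := rfl
lemma I11 : g3Inv ε μ p 1 1 = ε * exp (2 * p 2) := rfl
lemma I22 : g3Inv ε μ p 2 2 = μ⁻¹ := rfl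
lemma I01 : g3Inv ε μ p 0 1 = 0 := rfl
lemma I02 : g3Inv ε μ p 0 2 = 0 := rfl
lemma I10 : g3Inv ε μ p 1 0 = 0 := rfl
lemma I12 : g3Inv ε μ p 1 2 = 0 := rfl
lemma I20 : g3Inv ε μ p 2 0 = 0 := rfl
lemma I21 : g3Inv ε μ p 2 1 = 0 := rfl
end Entries

lemma fin0 (h : 0 < 3) : (⟨0, h⟩ : Fin 3) = 0 := rfl
lemma fin1 (h : 1 < 3) : (⟨1, h⟩ : Fin 3) = 1 := rfl
lemma fin2 (h : 2 < 3) : (⟨2, h⟩ : Fin 3) = 2 := rfl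

/-- Closed form of the Christoffel symbols. -/
noncomputable def G (ε μ : ℝ) : Fin 3 → Fin 3 → Fin 3 → (Fin 3 → ℝ) → ℝ
  | 0, 0, 2 => fun _ => ε * ε
  | 0, 2, 0 => fun _ => ε * ε
  | 1, 1, 2 => fun _ => -(ε * ε)
  | 1, 2, 1 => fun _ => -(ε * ε)
  | 2, 0, 0 => fun p => (-(ε / μ)) * exp (2 * p 2)
  | 2, 1, 1 => fun p => (ε / μ) * exp (-2 * p 2)
  | _, _, _ => fun _ => 0

lemma gamma_eq (ε μ : ℝ) (k i j : Fin 3) : Γ3 ε μ k i j = G ε μ k i j := by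
  funext p
  fin_cases k <;> fin_cases i <;> fin_cases j <;>
    · simp only [Γ3, Fin.sum_univ_three, fin0, fin1, fin2,
        E00, E11, E22, E01, E02, E10, E12, E20, E21,
        I00, I11, I22, I01, I02, I10, I12, I20, I21, pd_cexp, pd_const, G]
      norm_num [neg_mul, Real.exp_neg, Fin.ext_iff]
      try field_simp
      try ring

set_option maxHeartbeats 4000000 in
/-- The Ricci tensor of the 3D generalized symmetric metric is the constant
matrix diag(0,0,-2); in particular it is degenerate at every point. -/
theorem ricci_3d (ε μ : ℝ) (hε : ε = 1 ∨ ε = -1) (hμ : μ ≠ 0) :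
    ∀ p : Fin 3 → ℝ,
      Ric3 ε μ p = Matrix.diagonal ![0, 0, -2] ∧ (Ric3 ε μ p).det = 0 := by
  intro p
  have hmain : Ric3 ε μ p = Matrix.diagonal ![0, 0, -2] := by
    ext i j
    rcases hε with rfl | rfl <;>
    fin_cases i <;> fin_cases j <;>
    · simp only [Ric3, Matrix.of_apply, Fin.sum_univ_three, fin0, fin1, fin2,
        gamma_eq, G, pd_cexp, pd_const, Matrix.diagonal_apply]
      norm_num [neg_mul, Real.exp_neg, Matrix.cons_val_zero,
        Matrix.cons_val_one, Matrix.head_cons, Fin.ext_iff, Matrix.cons_val_two,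
          Matrix.vecHead, Matrix.vecTail]
      try rw [if_neg (by decide)]
      try field_simp
      try ring
  refine ⟨hmain, ?_⟩
  rw [hmain]
  simp [Matrix.det_diagonal, Fin.prod_univ_three]
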